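/- For k ≥ 2, deleting the vertex a_1 (and all incident edges) from Δ^L_{k,1} yields a graph in which the distance between c and b_{k+1} is exactly 3; in particular, the resulting graph has diameter at least 3. -/

import Mathlib

inductive V (k n : ℕ) where
  | c : V k n
  | a : Fin k → V k n
  | b : Fin (k + n) → V k n
deriving DecidableEq, Fintype

def adj (k n : ℕ) : V k n → V k n → Prop
  | .a i, .a j => i ≠ j
  | .b i, .b j => i ≠ j
  | .a i, .b j => (j : ℕ) = (i : ℕ) ∨ (j : ℕ) = k + i
  | .b j, .a i => (j : ℕ) = (i : ℕ) ∨ (j : ℕ) = k + i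
  | .c, .a _ => True
  | .a _, .c => True
  | _, _ => False

instance (k n : ℕ) : DecidableRel (adj k n) := fun x y => by
  cases x <;> cases y <;> simp only [adj] <;> infer_instance

def DeltaL (k n : ℕ) : SimpleGraph (V k n) where
  Adj := adj k n
  symm := by
    constructor
    intro x y h
    cases x <;> cases y <;> simp_all [adj] <;> tauto
  loopless := by
    constructor
    intro x h
    cases x <;> simp_all [adj]

theorem stmt5 (k : ℕ) (hk : 2 ≤ k) :
    (((DeltaL k 1).induce {x : V k 1 | x ≠ V.a ⟨0, by omega⟩}).dist
        ⟨V.c, by simp⟩ ⟨V.b ⟨k, by omega⟩, by simp⟩ = 3) ∧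
    (∃ u v : {x : V k 1 | x ≠ V.a ⟨0, by omega⟩},
      3 ≤ ((DeltaL k 1).induce {x : V k 1 | x ≠ V.a ⟨0, by omega⟩}).dist u v) := by
  set S : Set (V k 1) := {x : V k 1 | x ≠ V.a ⟨0, by omega⟩} with hS
  set G := (DeltaL k 1).induce S with hG
  have h1k : 1 < k := by omega
  have h1k1 : 1 < k + 1 := by omega
  have hkk1 : k < k + 1 := by omega
  set u : S := ⟨V.c, by simp [hS]⟩
  set v : S := ⟨V.b ⟨k, hkk1⟩, by simp [hS]⟩
  have ha1 : (V.a ⟨1, h1k⟩ : V k 1) ∈ S := by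
    simp [hS, Fin.ext_iff]
  have hb1 : (V.b ⟨1, h1k1⟩ : V k 1) ∈ S := by simp [hS]
  have e1 : G.Adj u ⟨V.a ⟨1, h1k⟩, ha1⟩ := by
    simp [hG, DeltaL, adj, u]
  have e2 : G.Adj ⟨V.a ⟨1, h1k⟩, ha1⟩ ⟨V.b ⟨1, h1k1⟩, hb1⟩ := by
    simp [hG, DeltaL, adj]
  have e3 : G.Adj ⟨V.b ⟨1, h1k1⟩, hb1⟩ v := by
    simp [hG, DeltaL, adj, Fin.ext_iff, v]
    omega
  have w : G.Walk u v := .cons e1 (.cons e2 (.cons e3 .nil))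
  have hle : G.dist u v ≤ 3 := by
    have := SimpleGraph.dist_le (.cons e1 (.cons e2 (.cons e3 .nil)) : G.Walk u v)
    simpa using this
  have hreach : G.Reachable u v := ⟨w⟩
  have hne : u ≠ v := by
    simp [u, v, Subtype.ext_iff]
  have h0 : G.dist u v ≠ 0 := by
    intro h
    exact hne (hreach.dist_eq_zero_iff.mp h)
  have h1 : G.dist u v ≠ 1 := by
    intro h
    have hadj : G.Adj u v := SimpleGraph.dist_eq_one_iff_adj.mp h
    simp [hG, DeltaL, adj, u, v] at hadj
  have h2 : G.dist u v ≠ 2 := by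
    intro h
    obtain ⟨p, hp⟩ := hreach.exists_walk_length_eq_dist
    rw [h] at hp
    have huv : (u : V k 1) = V.c ∧ (v : V k 1) = V.b ⟨k, hkk1⟩ := ⟨rfl, rfl⟩
    clear_value u v
    obtain ⟨u', hu'⟩ := u
    obtain ⟨v', hv'⟩ := v
    obtain ⟨h5, h6⟩ := huv
    simp only at h5 h6
    subst h5 h6
    cases p with
    | cons hadj q =>
      cases q with
      | nil => simp at hp
      | cons hadj2 r =>
        have hr0 : r.length = 0 := by simp only [SimpleGraph.Walk.length_cons] at hp; omega
        have := (SimpleGraph.Walk.eq_of_length_eq_zero hr0)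
        subst this
        rename_i w1
        obtain ⟨x, hx⟩ := w1
        have hadj' : (DeltaL k 1).Adj V.c x := hadj
        have hadj2' : (DeltaL k 1).Adj x (V.b ⟨k, hkk1⟩) := hadj2
        cases x with
        | c => simp [DeltaL, adj] at hadj'
        | b j => simp [DeltaL, adj] at hadj'
        | a i =>
          have : (k : ℕ) = (i : ℕ) ∨ (k : ℕ) = k + i := hadj2'
          have hik : (i : ℕ) < k := i.isLt
          have : (i : ℕ) = 0 := by omega
          apply hx
          simp [hS, Fin.ext_iff, this]
  have hd : G.dist u v = 3 := by omega
  exact ⟨hd, u, v, by omega⟩
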